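/- Let g: ℝ → ℝ be a C¹ map with g(0) = 0 that commutes with the linear contraction f(t) = λt for some λ ∈ (0,1) (i.e., g(λt) = λ g(t) for all t). Then g is linear: g(t) = g'(0)·t for all t ∈ ℝ. -/

import Mathlib

/-- A `C¹` map `g : ℝ → ℝ` with `g 0 = 0` commuting with the contraction `t ↦ λt`,
`λ ∈ (0,1)`, is linear: `g t = g'(0) · t`. -/
theorem stmt_8 (lam : ℝ) (hlam : lam ∈ Set.Ioo (0 : ℝ) 1)
    (g : ℝ → ℝ) (hg : ContDiff ℝ 1 g) (h0 : g 0 = 0)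
    (hcomm : ∀ t : ℝ, g (lam * t) = lam * g t) :
    ∀ t : ℝ, g t = deriv g 0 * t := by
  obtain ⟨hl0, hl1⟩ := hlam
  have hlne : lam ≠ 0 := ne_of_gt hl0
  have hiter : ∀ (n : ℕ) (t : ℝ), g (lam ^ n * t) = lam ^ n * g t := by
    intro n
    induction n with
    | zero => simp
    | succ n ih =>
      intro t
      have : lam ^ (n + 1) * t = lam * (lam ^ n * t) := by ring
      rw [this, hcomm, ih]; ring
  intro t
  rcases eq_or_ne t 0 with rfl | ht
  · simp [h0]
  have hd : HasDerivAt g (deriv g 0) 0 :=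
    ((hg.differentiable one_ne_zero) 0).hasDerivAt
  have hslope := hasDerivAt_iff_tendsto_slope.mp hd
  -- sequence x n = lam ^ n * t tends to 0 within {0}ᶜ
  have htend : Filter.Tendsto (fun n : ℕ => lam ^ n * t) Filter.atTop (nhdsWithin 0 {(0:ℝ)}ᶜ) := by
    apply tendsto_nhdsWithin_of_tendsto_nhds_of_eventually_within
    · have : Filter.Tendsto (fun n : ℕ => lam ^ n) Filter.atTop (nhds 0) :=
        tendsto_pow_atTop_nhds_zero_of_lt_one (le_of_lt hl0) hl1
      simpa using this.mul_const t
    · exact Filter.Eventually.of_forall fun n =>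
        mul_ne_zero (pow_ne_zero n hlne) ht
  have hconst : (fun n : ℕ => slope g 0 (lam ^ n * t)) = fun _ => g t / t := by
    funext n
    simp only [slope_def_field, h0]
    rw [hiter n t]
    field_simp
    ring
  have := hslope.comp htend
  rw [show (slope g 0 ∘ fun n : ℕ => lam ^ n * t) = fun n : ℕ => slope g 0 (lam ^ n * t) from rfl,
    hconst] at this
  have heq : g t / t = deriv g 0 := tendsto_nhds_unique tendsto_const_nhds this
  field_simp at heq
  linarith [heq]
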